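/- Let m ≥ 2 and let p be a pinned vertex attached to x ∈ V. Suppose the underlying graph of the voltage digraph contains a 'lollipop': a path from x to a vertex v consisting of s−1 ≥ 0 steps through pairwise distinct vertices (so the path from p through x to v in the lift data has length s ≥ 1), together with a cycle of length q ≥ 3 through v in the underlying graph whose vertices are pairwise distinct and meet the path only at v. If the net voltage B of the cycle is nonzero in ZMod m, then the lift with pinned vertices contains a cycle of length 2s + q passing through p. -/

import Mathlib

/-- A voltage digraph over `ZMod m`: an irreflexive arc set `A ⊆ V × V` together with a
voltage function assigning to each arc an element of `ZMod m`. -/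
structure VoltageDigraph (V : Type) (m : ℕ) where
  A : Set (V × V)
  irrefl : ∀ v : V, (v, v) ∉ A
  vol : V × V → ZMod m

namespace VoltageDigraph

variable {V : Type} {m : ℕ}

/-- The underlying simple graph of a voltage digraph: `v` is adjacent to `w` iff
`(v,w) ∈ A` or `(w,v) ∈ A`. -/
def underlying (D : VoltageDigraph V m) : SimpleGraph V where
  Adj v w := (v, w) ∈ D.A ∨ (w, v) ∈ D.A
  symm := ⟨fun v w h => h.symm⟩
  loopless := ⟨fun v h => h.elim (D.irrefl v) (D.irrefl v)⟩

/-- The lift of a voltage digraph: the simple graph on `V × ZMod m` in which `(v,i)` and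
`(w,j)` are adjacent iff `(v,w) ∈ A` and `j = i + vol (v,w)`, or `(w,v) ∈ A` and
`i = j + vol (w,v)`. -/
def lift (D : VoltageDigraph V m) : SimpleGraph (V × ZMod m) where
  Adj p q := ((p.1, q.1) ∈ D.A ∧ q.2 = p.2 + D.vol (p.1, q.1)) ∨
    ((q.1, p.1) ∈ D.A ∧ p.2 = q.2 + D.vol (q.1, p.1))
  symm := ⟨fun p q h => h.symm⟩
  loopless := ⟨fun p h => h.elim (fun h' => D.irrefl p.1 h'.1) (fun h' => D.irrefl p.1 h'.1)⟩

/-- The signed voltage of a single step `v → w` of a walk in the underlying graph: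
`vol (v,w)` if the step traverses the arc `(v,w)` from tail to head, and `- vol (w,v)`
otherwise (i.e. if it traverses the arc `(w,v)` from head to tail). -/
noncomputable def netStep (D : VoltageDigraph V m) (v w : V) : ZMod m := by
  classical exact if (v, w) ∈ D.A then D.vol (v, w) else - D.vol (w, v)

/-- The net voltage of a walk in the underlying graph: the sum of the signed voltages of
its steps. -/
noncomputable def netVoltage (D : VoltageDigraph V m) {u v : V}
    (w : D.underlying.Walk u v) : ZMod m :=
  (w.darts.map (fun d => D.netStep d.fst d.snd)).sum

/-- The lift with pinned vertices: the lift graph augmented by one extra vertex for each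
pinned vertex `p` (attached to `attach p ∈ V`), adjacent to `(attach p, i)` for every
`i : ZMod m`. -/
def pinnedLift (D : VoltageDigraph V m) {P : Type} (attach : P → V) :
    SimpleGraph ((V × ZMod m) ⊕ P) :=
  SimpleGraph.fromRel (fun a b =>
    (∃ u v : V × ZMod m, a = Sum.inl u ∧ b = Sum.inl v ∧ D.lift.Adj u v) ∨
    (∃ (p : P) (u : V × ZMod m), a = Sum.inr p ∧ b = Sum.inl u ∧ attach p = u.1))

end VoltageDigraph

namespace VoltageDigraph

variable {V : Type} {m : ℕ} (D : VoltageDigraph V m)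

@[simp] lemma netVoltage_nil {u : V} : D.netVoltage (SimpleGraph.Walk.nil : D.underlying.Walk u u) = 0 := by
  simp [netVoltage]

@[simp] lemma netVoltage_cons {u w v : V} (h : D.underlying.Adj u w) (p : D.underlying.Walk w v) :
    D.netVoltage (SimpleGraph.Walk.cons h p) = D.netStep u w + D.netVoltage p := by
  simp [netVoltage]

lemma adj_lift_step {u w : V} (h : D.underlying.Adj u w) (i : ZMod m) :
    D.lift.Adj (u, i) (w, i + D.netStep u w) := by
  by_cases h1 : (u, w) ∈ D.A
  · exact Or.inl ⟨h1, by simp [netStep, h1]⟩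
  · have h2 : (w, u) ∈ D.A := h.resolve_left h1
    refine Or.inr ⟨h2, ?_⟩
    simp [netStep, h1]

noncomputable def liftWalkAux (D : VoltageDigraph V m) :
    ∀ {u v : V} (w : D.underlying.Walk u v) (i : ZMod m),
    D.lift.Walk (u, i) (v, i + D.netVoltage w)
  | _, _, SimpleGraph.Walk.nil, i => SimpleGraph.Walk.nil.copy rfl (by simp)
  | _, _, SimpleGraph.Walk.cons h w, i =>
      (SimpleGraph.Walk.cons (D.adj_lift_step h i)
        (liftWalkAux D w (i + D.netStep _ _))).copy rfl (by simp [add_assoc])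

noncomputable def liftWalk {u v : V} (w : D.underlying.Walk u v) (i : ZMod m) :
    D.lift.Walk (u, i) (v, i + D.netVoltage w) := liftWalkAux D w i

lemma liftWalk_nil {u : V} (i : ZMod m) :
    D.liftWalk (SimpleGraph.Walk.nil : D.underlying.Walk u u) i
      = SimpleGraph.Walk.nil.copy rfl (by simp) := rfl

lemma liftWalk_cons {u w' v : V} (h : D.underlying.Adj u w') (w : D.underlying.Walk w' v)
    (i : ZMod m) :
    D.liftWalk (SimpleGraph.Walk.cons h w) i
      = (SimpleGraph.Walk.cons (D.adj_lift_step h i)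
        (D.liftWalk w (i + D.netStep u w'))).copy rfl (by simp [add_assoc]) := rfl

@[simp] lemma liftWalk_length {u v : V} (w : D.underlying.Walk u v) (i : ZMod m) :
    (D.liftWalk w i).length = w.length := by
  induction w generalizing i with
  | nil => simp [liftWalk_nil, liftWalk_cons]
  | cons h w ih => simp [liftWalk_cons, ih]

@[simp] lemma liftWalk_support_map_fst {u v : V} (w : D.underlying.Walk u v) (i : ZMod m) :
    (D.liftWalk w i).support.map Prod.fst = w.support := by
  induction w generalizing i with
  | nil => simp [liftWalk_nil, liftWalk_cons]
  | cons h w ih => simp [liftWalk_cons, ih]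

lemma liftWalk_support_tail_map_fst {u v : V} (w : D.underlying.Walk u v) (i : ZMod m) :
    (D.liftWalk w i).support.tail.map Prod.fst = w.support.tail := by
  cases w with
  | nil => simp [liftWalk_nil, liftWalk_cons]
  | cons h w => simp [liftWalk_nil, liftWalk_cons]

lemma fst_mem_of_mem_support {u v : V} (w : D.underlying.Walk u v) (i : ZMod m)
    {z : V × ZMod m} (hz : z ∈ (D.liftWalk w i).support) : z.1 ∈ w.support := by
  rw [← D.liftWalk_support_map_fst w i]
  exact List.mem_map_of_mem hz

lemma mem_support_liftWalk_add {u v : V} (w : D.underlying.Walk u v) (i j : ZMod m)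
    (z : V × ZMod m) (hz : z ∈ (D.liftWalk w i).support) :
    (z.1, z.2 + j) ∈ (D.liftWalk w (i + j)).support := by
  induction w generalizing i with
  | nil =>
    simp only [liftWalk_nil, liftWalk_cons, SimpleGraph.Walk.support_copy, SimpleGraph.Walk.support_nil,
      List.mem_singleton] at hz ⊢
    subst hz; rfl
  | cons h w ih =>
    simp only [liftWalk_nil, liftWalk_cons, SimpleGraph.Walk.support_copy, SimpleGraph.Walk.support_cons,
      List.mem_cons] at hz ⊢
    rcases hz with rfl | hz
    · exact Or.inl rfl
    · refine Or.inr ?_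
      have := ih (i + D.netStep _ _) hz
      rwa [show i + D.netStep _ _ + j = i + j + D.netStep _ _ by ring] at this

lemma snd_eq_of_mem' {α β : Type*} {l : List (α × β)} (h : (l.map Prod.fst).Nodup)
    {a : α} {b b' : β} (h1 : (a, b) ∈ l) (h2 : (a, b') ∈ l) : b = b' := by
  have := List.inj_on_of_nodup_map h h1 h2 rfl
  exact congrArg Prod.snd this

lemma mem_support_liftWalk_add' {u v : V} (w : D.underlying.Walk u v) (i j k : ZMod m)
    (hk : k = i + j) (z : V × ZMod m) (hz : z ∈ (D.liftWalk w i).support) :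
    (z.1, z.2 + j) ∈ (D.liftWalk w k).support := by
  subst hk; exact D.mem_support_liftWalk_add w i j z hz

lemma liftWalk_isPath {u v : V} {w : D.underlying.Walk u v} (hw : w.IsPath) (i : ZMod m) :
    (D.liftWalk w i).IsPath := by
  rw [SimpleGraph.Walk.isPath_def]
  apply List.Nodup.of_map Prod.fst
  rw [D.liftWalk_support_map_fst]
  exact hw.support_nodup

lemma liftWalk_cycle_isPath {v : V} {w : D.underlying.Walk v v} (hw : w.IsCycle)
    (hB : D.netVoltage w ≠ 0) (i : ZMod m) : (D.liftWalk w i).IsPath := by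
  rw [SimpleGraph.Walk.isPath_def]
  have hne : ((v, i) : V × ZMod m) ≠ (v, i + D.netVoltage w) := by
    simp only [ne_eq, Prod.mk.injEq, true_and]
    intro h; exact hB (by linear_combination -h)
  have htail : (D.liftWalk w i).support.tail.map Prod.fst = w.support.tail :=
    D.liftWalk_support_tail_map_fst w i
  have htn : ((D.liftWalk w i).support.tail.map Prod.fst).Nodup := by
    rw [htail]; exact hw.support_nodup
  have hcons := (D.liftWalk w i).support_eq_cons
  rw [hcons]
  refine List.nodup_cons.2 ⟨?_, List.Nodup.of_map _ htn⟩
  intro hmem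
  have hend : ((v, i + D.netVoltage w) : V × ZMod m) ∈ (D.liftWalk w i).support.tail :=
    SimpleGraph.Walk.end_mem_tail_support_of_ne hne _
  have := snd_eq_of_mem' htn hmem hend
  exact hB (by linear_combination -this)

def inlHom {P : Type} (attach : P → V) : D.lift →g D.pinnedLift attach where
  toFun := Sum.inl
  map_rel' := fun {u v} h =>
    ⟨fun hc => h.ne (Sum.inl.inj hc), Or.inl (Or.inl ⟨u, v, rfl, rfl, h⟩)⟩

end VoltageDigraph

open SimpleGraph Walk in
lemma isPath_append_aux {W : Type*} {G : SimpleGraph W} {u v w : W} {p : G.Walk u v}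
    {q : G.Walk v w} (hp : p.IsPath) (hq : q.IsPath)
    (h : ∀ z, z ∈ p.support → z ∈ q.support → z = v) : (p.append q).IsPath := by
  rw [SimpleGraph.Walk.isPath_def, SimpleGraph.Walk.support_append]
  have hq' := hq.support_nodup
  rw [q.support_eq_cons, List.nodup_cons] at hq'
  refine List.Nodup.append hp.support_nodup hq'.2 ?_
  intro z hz hz'
  have := h z hz (List.mem_of_mem_tail hz')
  subst this
  exact hq'.1 hz'


/-- lollipop walks. If `p` is a pinned vertex attached to `x`, the underlying
graph contains a path of `s - 1` steps (`s ≥ 1`) from `x` to `v` together with a cycle of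
length `q ≥ 3` through `v` meeting the path only at `v`, and the net voltage of the cycle
is nonzero in `ZMod m`, then the lift with pinned vertices contains a cycle of length
`2s + q` passing through `p`. -/
theorem statement8 {V P : Type} [Fintype V] [Fintype P] {m : ℕ} (hm : 2 ≤ m)
    (D : VoltageDigraph V m) (attach : P → V) (p : P) (x : V) (hx : attach p = x)
    (s q : ℕ) (hs : 1 ≤ s) (hq : 3 ≤ q) (v : V)
    (pw : D.underlying.Walk x v) (hpath : pw.IsPath) (hplen : pw.length = s - 1)
    (cw : D.underlying.Walk v v) (hcyc : cw.IsCycle) (hclen : cw.length = q)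
    (hmeet : ∀ u ∈ pw.support, u ∈ cw.support → u = v)
    (hB : D.netVoltage cw ≠ 0) :
    ∃ c : (D.pinnedLift attach).Walk (Sum.inr p) (Sum.inr p),
      c.IsCycle ∧ c.length = 2 * s + q := by
  classical
  obtain ⟨a, ha⟩ : ∃ a, D.netVoltage pw = a := ⟨_, rfl⟩
  obtain ⟨B, hBdef⟩ : ∃ B, D.netVoltage cw = B := ⟨_, rfl⟩
  rw [hBdef] at hB
  let P1 : D.lift.Walk (x, (0 : ZMod m)) (v, 0 + a) := (D.liftWalk pw 0).copy rfl (by rw [ha])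
  let C : D.lift.Walk (v, 0 + a) (v, 0 + a + B) := (D.liftWalk cw (0 + a)).copy rfl (by rw [hBdef])
  let P2 : D.lift.Walk (x, (B : ZMod m)) (v, B + a) := (D.liftWalk pw B).copy rfl (by rw [ha])
  have hcopy : ((v, B + a) : V × ZMod m) = (v, 0 + a + B) := by
    simp only [Prod.mk.injEq, true_and]; ring
  let P2r : D.lift.Walk (v, 0 + a + B) (x, B) := (P2.reverse).copy hcopy rfl
  let Wmain : D.lift.Walk (x, (0:ZMod m)) (x, B) := P1.append (C.append P2r)
  let f := D.inlHom attach
  have hE : (D.pinnedLift attach).Adj (Sum.inl ((x, B) : V × ZMod m)) (Sum.inr p) :=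
    ⟨by simp, Or.inr (Or.inr ⟨p, (x, B), rfl, rfl, hx⟩)⟩
  have hpE : (D.pinnedLift attach).Adj (Sum.inr p) (Sum.inl ((x, (0:ZMod m)) : V × ZMod m)) :=
    ⟨by simp, Or.inl (Or.inr ⟨p, (x, 0), rfl, rfl, hx⟩)⟩
  let W : (D.pinnedLift attach).Walk (Sum.inl ((x, (0:ZMod m)) : V × ZMod m)) (Sum.inr p) :=
    (Wmain.map f).append hE.toWalk
  -- support normalizations
  have hsP1 : P1.support = (D.liftWalk pw 0).support := SimpleGraph.Walk.support_copy _ _ _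
  have hsC : C.support = (D.liftWalk cw (0 + a)).support := SimpleGraph.Walk.support_copy _ _ _
  have hsP2 : P2.support = (D.liftWalk pw B).support := SimpleGraph.Walk.support_copy _ _ _
  have hsP2r : ∀ z, z ∈ P2r.support ↔ z ∈ (D.liftWalk pw B).support := by
    intro z
    simp only [P2r, SimpleGraph.Walk.support_copy, SimpleGraph.Walk.support_reverse,
      List.mem_reverse, hsP2]
  have hndP1 : ((D.liftWalk pw 0).support.map Prod.fst).Nodup := by
    rw [D.liftWalk_support_map_fst]; exact hpath.support_nodup
  have hndP2 : ((D.liftWalk pw B).support.map Prod.fst).Nodup := by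
    rw [D.liftWalk_support_map_fst]; exact hpath.support_nodup
  have hBne : B ≠ 0 := hB
  refine ⟨SimpleGraph.Walk.cons hpE W, ?_, ?_⟩
  · rw [SimpleGraph.Walk.cons_isCycle_iff]
    constructor
    · -- W is a path
      have hP1 : P1.IsPath := by
        rw [SimpleGraph.Walk.isPath_def, hsP1]
        exact (D.liftWalk_isPath hpath 0).support_nodup
      have hC : C.IsPath := by
        rw [SimpleGraph.Walk.isPath_def, hsC]
        exact (D.liftWalk_cycle_isPath hcyc (hBdef ▸ hB) (0 + a)).support_nodup
      have hP2r : P2r.IsPath := by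
        rw [SimpleGraph.Walk.isPath_def]
        have : P2r.support.Nodup ↔ (D.liftWalk pw B).support.Nodup := by
          simp only [P2r, SimpleGraph.Walk.support_copy, SimpleGraph.Walk.support_reverse,
            List.nodup_reverse, hsP2]
        exact this.2 (D.liftWalk_isPath hpath B).support_nodup
      have hP1P2 : ∀ z : V × ZMod m, z ∈ P1.support → z ∉ (D.liftWalk pw B).support := by
        intro z hz1 hz2
        rw [hsP1] at hz1
        have h1 := D.mem_support_liftWalk_add' pw 0 B B (zero_add B).symm z hz1
        have := VoltageDigraph.snd_eq_of_mem' hndP2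
          (show (z.1, z.2) ∈ (D.liftWalk pw B).support from hz2) h1
        exact hBne (by linear_combination -this)
      have hCP2 : ∀ z : V × ZMod m, z ∈ C.support → z ∈ P2r.support → z = (v, 0 + a + B) := by
        intro z hzC hzP
        have hzP2 : z ∈ (D.liftWalk pw B).support := (hsP2r z).1 hzP
        rw [hsC] at hzC
        have h1 : z.1 ∈ cw.support := D.fst_mem_of_mem_support cw _ hzC
        have h2 : z.1 ∈ pw.support := D.fst_mem_of_mem_support pw _ hzP2
        have hv : z.1 = v := hmeet z.1 h2 h1
        have hend : ((v, B + a) : V × ZMod m) ∈ (D.liftWalk pw B).support := by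
          rw [← hsP2]; exact SimpleGraph.Walk.end_mem_support _
        have hz' : (v, z.2) ∈ (D.liftWalk pw B).support :=
          (Prod.ext_iff.2 ⟨hv, rfl⟩ : z = (v, z.2)) ▸ hzP2
        have := VoltageDigraph.snd_eq_of_mem' hndP2 hz' hend
        rw [← hcopy, Prod.ext_iff]
        exact ⟨hv, this⟩
      have hWmain : Wmain.IsPath := by
        refine isPath_append_aux hP1 (isPath_append_aux hC hP2r hCP2) ?_
        intro z hz1 hz2
        rw [SimpleGraph.Walk.mem_support_append_iff] at hz2
        rcases hz2 with hz2 | hz2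
        · -- z in P1 and C
          rw [hsC] at hz2
          have h2 : z.1 ∈ cw.support := D.fst_mem_of_mem_support cw _ hz2
          rw [hsP1] at hz1
          have h1 : z.1 ∈ pw.support := D.fst_mem_of_mem_support pw _ hz1
          have hv : z.1 = v := hmeet z.1 h1 h2
          have hend : ((v, 0 + a) : V × ZMod m) ∈ (D.liftWalk pw 0).support := by
            rw [← hsP1]; exact SimpleGraph.Walk.end_mem_support _
          have hz' : (v, z.2) ∈ (D.liftWalk pw 0).support :=
            (Prod.ext_iff.2 ⟨hv, rfl⟩ : z = (v, z.2)) ▸ hz1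
          have := VoltageDigraph.snd_eq_of_mem' hndP1 hz' hend
          rw [Prod.ext_iff]; exact ⟨hv, this⟩
        · exact absurd ((hsP2r z).1 hz2) (hP1P2 z hz1)
      have hWmap : (Wmain.map f).IsPath :=
        SimpleGraph.Walk.map_isPath_of_injective Sum.inl_injective hWmain
      refine isPath_append_aux hWmap
        (by simp [SimpleGraph.Walk.isPath_def, f, VoltageDigraph.inlHom]) ?_
      intro z hz1 hz2
      change z ∈ hE.toWalk.support at hz2
      simp only [SimpleGraph.Adj.support_toWalk, SimpleGraph.Walk.support_cons,
        SimpleGraph.Walk.support_nil, List.mem_cons, List.not_mem_nil, or_false] at hz2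
      rcases hz2 with rfl | rfl
      · rfl
      · exfalso
        replace hz1 := (congrArg (Sum.inr p ∈ ·) (SimpleGraph.Walk.support_map f Wmain)).mp hz1
        obtain ⟨y, _, hy⟩ := List.mem_map.1 hz1
        exact Sum.inl_ne_inr hy
    · -- edge not in W
      intro hmem
      have : W.edges = (Wmain.map f).edges ++ hE.toWalk.edges := SimpleGraph.Walk.edges_append _ _
      rw [this] at hmem
      rcases List.mem_append.1 hmem with hmem | hmem
      · have : (Sum.inr p : (V × ZMod m) ⊕ P) ∈ (Wmain.map f).support :=
          SimpleGraph.Walk.fst_mem_support_of_mem_edges _ hmem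
        rw [SimpleGraph.Walk.support_map] at this
        obtain ⟨y, _, hy⟩ := List.mem_map.1 this
        exact Sum.inl_ne_inr hy
      · simp only [SimpleGraph.Adj.toWalk, SimpleGraph.Walk.edges_cons,
          SimpleGraph.Walk.edges_nil, List.mem_singleton] at hmem
        rw [Sym2.eq_iff] at hmem
        rcases hmem with ⟨h1, h2⟩ | ⟨h1, h2⟩
        · exact Sum.inr_ne_inl h1
        · have h3 : ((x, (0:ZMod m)) : V × ZMod m) = (x, B) := Sum.inl.inj h2
          have h4 : (0 : ZMod m) = B := congrArg Prod.snd h3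
          exact hBne h4.symm
  · -- length
    have h1 : Wmain.length = (s - 1) + (q + (s - 1)) := by
      simp only [Wmain, SimpleGraph.Walk.length_append, SimpleGraph.Walk.length_copy,
        SimpleGraph.Walk.length_reverse, P1, C, P2r, P2, VoltageDigraph.liftWalk_length,
        hplen, hclen]
    have hW : W.length = (Wmain.map f).length + hE.toWalk.length := SimpleGraph.Walk.length_append _ _
    simp only [SimpleGraph.Walk.length_cons, hW, SimpleGraph.Walk.length_append,
      SimpleGraph.Walk.length_map, h1, SimpleGraph.Adj.length_toWalk, SimpleGraph.Walk.length_nil]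
    omega
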